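/- The star graph G_k (the strongly chordal gadget) is chordal: G_k consists of a root r, vertices b_0,...,b_{2^k-1} forming a clique each adjacent to r, vertices d_0,...,d_{2^k-1} forming a clique with all edges between b's and d's present, and for each node S of the complete binary partition hierarchy of {0,...,2^k-1} (dyadic intervals) a vertex c_S adjacent exactly to {b_i, d_i : i ∈ S}. Then G_k has no induced cycle of length ≥ 4. -/
import Mathlib


open SimpleGraph

/-- Vertices of the star graph G_k: the root `r`, the clique vertices
`b i` and `d i` for i < 2^k, and, for every dyadic interval of {0,...,2^k-1}
(given by a level `t ≤ k` and an index `j < 2^t`), a vertex `c t j`. -/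
inductive SVtx (k : ℕ) : Type
  | r : SVtx k
  | b : Fin (2 ^ k) → SVtx k
  | d : Fin (2 ^ k) → SVtx k
  | c : (t : Fin (k + 1)) → Fin (2 ^ (t : ℕ)) → SVtx k

/-- r is adjacent to all b's; the b's and d's together form a clique;
`c t j` is adjacent exactly to the b_i and d_i with i in the dyadic interval
{ i | i / 2^(k-t) = j }. -/
def starRel (k : ℕ) : SVtx k → SVtx k → Prop
  | .r, .b _ => True
  | .b _, .b _ => True
  | .d _, .d _ => True
  | .b _, .d _ => True
  | .c t j, .b i => (i : ℕ) / 2 ^ (k - (t : ℕ)) = (j : ℕ)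
  | .c t j, .d i => (i : ℕ) / 2 ^ (k - (t : ℕ)) = (j : ℕ)
  | _, _ => False

def starG (k : ℕ) : SimpleGraph (SVtx k) := SimpleGraph.fromRel (starRel k)

/-- A graph is chordal iff it has no induced cycle of length ≥ 4. -/
def IsChordal {V : Type} (G : SimpleGraph V) : Prop :=
  ∀ n : ℕ, 4 ≤ n → IsEmpty (SimpleGraph.cycleGraph n ↪g G)

/-- `x` is one of the clique vertices `b i` or `d i`. -/
def SVtx.isBD {k : ℕ} : SVtx k → Prop
  | .b _ => True
  | .d _ => True
  | _ => False

lemma starG_adj_of_BD {k : ℕ} {x y : SVtx k} (hx : x.isBD) (hy : y.isBD)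
    (hxy : x ≠ y) : (starG k).Adj x y := by
  rw [starG, SimpleGraph.fromRel_adj]
  refine ⟨hxy, ?_⟩
  cases x <;> cases y <;> simp_all [SVtx.isBD, starRel]

lemma starG_not_adj_of_not_BD {k : ℕ} {x y : SVtx k} (hx : ¬ x.isBD)
    (hy : ¬ y.isBD) : ¬ (starG k).Adj x y := by
  rw [starG, SimpleGraph.fromRel_adj]
  rintro ⟨-, h | h⟩ <;>
    cases x <;> cases y <;> simp_all [SVtx.isBD, starRel]

theorem stmt9 : ∀ k : ℕ, IsChordal (starG k) := by
  intro k n hn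
  constructor
  intro f
  obtain ⟨m, rfl⟩ : ∃ m, n = m + 4 := ⟨n - 4, by omega⟩
  -- abbreviations
  set P : Fin (m+4) → Prop := fun u => (f u).isBD with hP
  -- basic adjacency transfer
  have hA : ∀ u v : Fin (m+4), u ≠ v → P u → P v → (cycleGraph (m+4)).Adj u v := by
    intro u v huv hu hv
    exact f.map_adj_iff.mp (starG_adj_of_BD hu hv (fun h => huv (f.injective h)))
  have hB : ∀ u v : Fin (m+4), (cycleGraph (m+4)).Adj u v → P u ∨ P v := by
    intro u v hadj
    by_contra h
    push_neg at h
    exact starG_not_adj_of_not_BD h.1 h.2 (f.map_adj_iff.mpr hadj)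
  -- concrete vertices
  have hlt : ∀ a : ℕ, a < 4 → a < m+4 := by omega
  have adj_iff : ∀ a b : ℕ, (ha : a < m+4) → (hb : b < m+4) →
      ((cycleGraph (m+4)).Adj ⟨a, ha⟩ ⟨b, hb⟩ ↔ ((m+4) - b + a) % (m+4) = 1 ∨ ((m+4) - a + b) % (m+4) = 1) := by
    intro a b ha hb
    rw [cycleGraph_adj']
    simp [Fin.sub_def]
  have mod_eq : ∀ x : ℕ, x < m+4 → x % (m+4) = x := fun x hx => Nat.mod_eq_of_lt hx
  have mod_eq' : ∀ x : ℕ, m+4 ≤ x → x < 2*(m+4) → x % (m+4) = x - (m+4) := by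
    intro x h1 h2
    rw [Nat.mod_eq_sub_mod h1, Nat.mod_eq_of_lt (by omega)]
  -- edges and non-edges
  have adj01 : (cycleGraph (m+4)).Adj ⟨0, hlt 0 (by norm_num)⟩ ⟨1, hlt 1 (by norm_num)⟩ := by
    rw [adj_iff]; right; rw [mod_eq' _ (by omega) (by omega)]; omega
  have adj12 : (cycleGraph (m+4)).Adj ⟨1, hlt 1 (by norm_num)⟩ ⟨2, hlt 2 (by norm_num)⟩ := by
    rw [adj_iff]; right; rw [mod_eq' _ (by omega) (by omega)]; omega
  have adj23 : (cycleGraph (m+4)).Adj ⟨2, hlt 2 (by norm_num)⟩ ⟨3, hlt 3 (by norm_num)⟩ := by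
    rw [adj_iff]; right; rw [mod_eq' _ (by omega) (by omega)]; omega
  have nadj02 : ¬ (cycleGraph (m+4)).Adj ⟨0, hlt 0 (by norm_num)⟩ ⟨2, hlt 2 (by norm_num)⟩ := by
    rw [adj_iff]
    rw [mod_eq _ (by omega), mod_eq' _ (by omega) (by omega)]; omega
  have nadj13 : ¬ (cycleGraph (m+4)).Adj ⟨1, hlt 1 (by norm_num)⟩ ⟨3, hlt 3 (by norm_num)⟩ := by
    rw [adj_iff]
    rw [mod_eq _ (by omega), mod_eq' _ (by omega) (by omega)]; omega
  -- vertex 1 is a clique vertex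
  have hP1 : P ⟨1, hlt 1 (by norm_num)⟩ := by
    by_contra h1
    have h0 : P ⟨0, hlt 0 (by norm_num)⟩ := (hB _ _ adj01).resolve_right h1
    have h2 : P ⟨2, hlt 2 (by norm_num)⟩ := (hB _ _ adj12).resolve_left h1
    exact nadj02 (hA _ _ (by simp [Fin.ext_iff]) h0 h2)
  have hP2 : P ⟨2, hlt 2 (by norm_num)⟩ := by
    by_contra h2
    have h1 : P ⟨1, hlt 1 (by norm_num)⟩ := (hB _ _ adj12).resolve_right h2
    have h3 : P ⟨3, hlt 3 (by norm_num)⟩ := (hB _ _ adj23).resolve_left h2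
    exact nadj13 (hA _ _ (by simp [Fin.ext_iff]) h1 h3)
  have hnP0 : ¬ P ⟨0, hlt 0 (by norm_num)⟩ := fun h0 =>
    nadj02 (hA _ _ (by simp [Fin.ext_iff]) h0 hP2)
  have hnP3 : ¬ P ⟨3, hlt 3 (by norm_num)⟩ := fun h3 =>
    nadj13 (hA _ _ (by simp [Fin.ext_iff]) hP1 h3)
  rcases Nat.eq_zero_or_pos m with rfl | hm
  · -- N = 4 : edge 3-0
    have adj30 : (cycleGraph (0+4)).Adj ⟨3, hlt 3 (by norm_num)⟩ ⟨0, hlt 0 (by norm_num)⟩ := by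
      rw [adj_iff]; right; rw [mod_eq _ (by omega)]
    exact (hB _ _ adj30).elim hnP3 hnP0
  · -- N ≥ 5 : vertex 4
    have h4 : (4 : ℕ) < m+4 := by omega
    have adj34 : (cycleGraph (m+4)).Adj ⟨3, hlt 3 (by norm_num)⟩ ⟨4, h4⟩ := by
      rw [adj_iff]; right; rw [mod_eq' _ (by omega) (by omega)]; omega
    have nadj24 : ¬ (cycleGraph (m+4)).Adj ⟨2, hlt 2 (by norm_num)⟩ ⟨4, h4⟩ := by
      rw [adj_iff]
      rw [mod_eq _ (by omega), mod_eq' _ (by omega) (by omega)]; omega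
    have hP4 : P ⟨4, h4⟩ := (hB _ _ adj34).resolve_left hnP3
    exact nadj24 (hA _ _ (by simp [Fin.ext_iff]) hP2 hP4)
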